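/- For any rational numbers a > a' ≥ 0 and any positive integer N, there exists a unique shortest N-path from a to a'. -/

import Mathlib

/-- An `N`-path is a strictly decreasing sequence of rationals (automatically
in lowest terms, as elements of `ℚ`) such that consecutive entries `x > y`
satisfy `x − y = N / (lcm(N, x.den) · lcm(N, y.den))`. -/
def IsNPath (N : ℕ) (l : List ℚ) : Prop :=
  l.Chain' fun x y => y < x ∧
    x - y = (N : ℚ) / ((Nat.lcm N x.den : ℚ) * (Nat.lcm N y.den : ℚ))

/-- An `N`-path from `a` to `a'`: an `N`-path whose first entry is `a` and
whose last entry is `a'`. -/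
def IsNPathFrom (N : ℕ) (a a' : ℚ) (l : List ℚ) : Prop :=
  IsNPath N l ∧ l.head? = some a ∧ l.getLast? = some a'

/-- A shortest `N`-path from `a` to `a'`: an `N`-path from `a` to `a'` such
that no proper subsequence (containing the endpoints) is an `N`-path from `a`
to `a'`. -/
def IsShortestNPath (N : ℕ) (a a' : ℚ) (l : List ℚ) : Prop :=
  IsNPathFrom N a a' l ∧
    ∀ l' : List ℚ, l'.Sublist l → l' ≠ l → ¬ IsNPathFrom N a a' l'

namespace Stmt15Aux

/-- Cross determinant of two rationals. -/
def det (x y : ℚ) : ℤ := x.num * y.den - y.num * x.den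

/-- Farey adjacency: `y < x` are Farey neighbours. -/
def FAdj (x y : ℚ) : Prop := y < x ∧ x - y = 1 / ((x.den : ℚ) * (y.den : ℚ))

lemma den_cast_pos (x : ℚ) : (0:ℚ) < (x.den : ℚ) := by exact_mod_cast x.pos

lemma mul_den_eq (x : ℚ) : x * (x.den : ℚ) = (x.num : ℚ) := by
  nth_rewrite 1 [← Rat.num_div_den x]; field_simp

lemma sub_eq_det (x y : ℚ) :
    x - y = ((det x y : ℤ) : ℚ) / ((x.den : ℚ) * (y.den : ℚ)) := by
  have hx := mul_den_eq x
  have hy := mul_den_eq y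
  have hdx : ((x.den:ℚ)) ≠ 0 := Nat.cast_ne_zero.2 x.den_nz
  have hdy : ((y.den:ℚ)) ≠ 0 := Nat.cast_ne_zero.2 y.den_nz
  rw [det, eq_div_iff (by positivity)]
  push_cast
  nlinarith [hx, hy]

lemma det_pos {x y : ℚ} : 0 < det x y ↔ y < x := by
  have hp : (0:ℚ) < (x.den : ℚ) * (y.den : ℚ) := by positivity
  rw [show (y < x) ↔ 0 < x - y from sub_pos.symm, sub_eq_det, lt_div_iff₀ hp, zero_mul]
  exact_mod_cast Iff.rfl

lemma det_neg {x y : ℚ} : det x y < 0 ↔ x < y := by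
  have hp : (0:ℚ) < (x.den : ℚ) * (y.den : ℚ) := by positivity
  rw [show (x < y) ↔ x - y < 0 from sub_neg.symm, sub_eq_det, div_lt_iff₀ hp, zero_mul]
  exact_mod_cast Iff.rfl

lemma fadj_iff {x y : ℚ} : FAdj x y ↔ det x y = 1 := by
  constructor
  · rintro ⟨h1, h2⟩
    have hp : (0:ℚ) < (x.den : ℚ) * (y.den : ℚ) := by positivity
    have := sub_eq_det x y
    rw [h2] at this
    have : ((det x y : ℤ) : ℚ) = 1 := by
      field_simp at this
      linarith
    exact_mod_cast this
  · intro h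
    refine ⟨det_pos.1 (by omega), ?_⟩
    rw [sub_eq_det, h]; norm_num

lemma den_between {x y z : ℚ} (h : FAdj x y) (h1 : y < z) (h2 : z < x) :
    (x.den : ℤ) + (y.den : ℤ) ≤ (z.den : ℤ) := by
  have hd : det x y = 1 := fadj_iff.1 h
  have h3 : 1 ≤ det x z := det_pos.2 h2
  have h4 : 1 ≤ det z y := det_pos.2 h1
  have key : (z.den : ℤ) * det x y = (y.den : ℤ) * det x z + (x.den : ℤ) * det z y := by
    unfold det; ring
  have hx : (1:ℤ) ≤ (x.den : ℤ) := by exact_mod_cast x.pos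
  have hy : (1:ℤ) ≤ (y.den : ℤ) := by exact_mod_cast y.pos
  have hz : (1:ℤ) ≤ (z.den : ℤ) := by exact_mod_cast z.pos
  nlinarith [key]

lemma pred_le_of_den_le {x y y' : ℚ} (hy : FAdj x y) (hy' : FAdj x y') (h : y.den ≤ y'.den) :
    y ≤ y' := by
  have e1 := hy.2
  have e2 := hy'.2
  have hden : (y.den:ℚ) ≤ (y'.den:ℚ) := by exact_mod_cast h
  have h1 : 1 / ((x.den:ℚ) * (y'.den:ℚ)) ≤ 1 / ((x.den:ℚ) * (y.den:ℚ)) := by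
    apply one_div_le_one_div_of_le (by positivity)
    nlinarith [den_cast_pos x]
  linarith

/-- Construct the Farey predecessor of `x` with given denominator `v`. -/
lemma exists_pred (x : ℚ) (v : ℕ) (hv : 0 < v) (hdvd : (x.den : ℤ) ∣ x.num * v - 1) :
    ∃ y : ℚ, FAdj x y ∧ y.den = v := by
  obtain ⟨a, ha⟩ := hdvd
  have hco : IsCoprime a ((v:ℤ)) := ⟨-(x.den:ℤ), x.num, by linarith⟩
  have hco' : a.natAbs.Coprime v := by
    have := Int.isCoprime_iff_gcd_eq_one.1 hco
    rwa [Int.gcd, Int.natAbs_natCast] at this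
  refine ⟨⟨a, v, hv.ne', hco'⟩, fadj_iff.2 ?_, rfl⟩
  show x.num * ((v:ℤ)) - a * (x.den:ℤ) = 1
  linarith


lemma exists_pred_ge (x β : ℚ) (hβ : β < x) : ∃ y, FAdj x y ∧ β ≤ y := by
  have hco : IsCoprime x.num ((x.den : ℤ)) := by
    rw [Int.isCoprime_iff_gcd_eq_one, Int.gcd, Int.natAbs_natCast]
    exact x.reduced
  obtain ⟨u, w, huw⟩ := hco   -- u * x.num + w * x.den = 1
  obtain ⟨M, hM⟩ := exists_nat_gt (max (1:ℚ) (1/(x - β)))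
  have hM1 : (1:ℚ) < (M:ℚ) := lt_of_le_of_lt (le_max_left _ _) hM
  have hMZ : 1 ≤ M := by exact_mod_cast hM1.le
  set k : ℕ := M + u.natAbs with hk
  set v : ℤ := u + k * x.den with hv
  have hdpos : (1:ℤ) ≤ (x.den : ℤ) := by exact_mod_cast x.pos
  have hvM : (M:ℤ) ≤ v := by
    have h1 : -(u.natAbs:ℤ) ≤ u := by omega
    have h2 : ((M:ℤ) + u.natAbs) * 1 ≤ ((M:ℤ) + u.natAbs) * (x.den:ℤ) := by
      apply mul_le_mul_of_nonneg_left hdpos; positivity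
    have : ((k:ℤ)) = (M:ℤ) + u.natAbs := by push_cast [hk]; ring
    rw [hv, this]
    nlinarith
  have hvpos : 0 < v := by omega
  have hdvd : (x.den : ℤ) ∣ x.num * v - 1 := by
    refine ⟨x.num * k - w, ?_⟩
    rw [hv]; nlinarith [huw]
  obtain ⟨y, hy, hyden⟩ := exists_pred x v.toNat (by omega) (by
    rwa [show ((v.toNat : ℤ)) = v by omega])
  refine ⟨y, hy, ?_⟩
  -- y = x - 1/(x.den * v) ≥ β
  have he := hy.2
  have hvQ : (M:ℚ) ≤ (y.den : ℚ) := by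
    have : M ≤ v.toNat := by omega
    rw [hyden]; exact_mod_cast this
  have hMpos : (0:ℚ) < M := by linarith
  have hstep : 1 / ((x.den:ℚ) * (y.den:ℚ)) ≤ 1 / (M:ℚ) := by
    apply one_div_le_one_div_of_le hMpos
    have h1 : (1:ℚ) ≤ (x.den:ℚ) := by exact_mod_cast x.pos
    nlinarith
  have hlast : 1 / (M:ℚ) < x - β := by
    rw [div_lt_iff₀ hMpos]
    have h2 : 1/(x-β) < M := lt_of_le_of_lt (le_max_right _ _) hM
    have h3 : 0 < x - β := by linarith
    calc (1:ℚ) = (1/(x-β)) * (x-β) := by field_simp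
    _ < (M:ℚ) * (x-β) := by apply mul_lt_mul_of_pos_right h2 h3
    _ = (x - β) * M := by ring
  linarith

lemma exists_min_pred (x β : ℚ) (hβ : β < x) :
    ∃ y, FAdj x y ∧ β ≤ y ∧ ∀ y', FAdj x y' → β ≤ y' → y ≤ y' := by
  classical
  have hne : ∃ n, ∃ y : ℚ, (FAdj x y ∧ β ≤ y) ∧ y.den = n := by
    obtain ⟨y, h1, h2⟩ := exists_pred_ge x β hβ
    exact ⟨y.den, y, ⟨h1, h2⟩, rfl⟩
  obtain ⟨y, ⟨h1, h2⟩, h3⟩ := Nat.find_spec hne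
  refine ⟨y, h1, h2, ?_⟩
  intro y' ha hb
  have hfind : Nat.find hne ≤ y'.den := Nat.find_min' hne ⟨y', ⟨ha, hb⟩, rfl⟩
  exact pred_le_of_den_le h1 ha (by omega)

lemma det_decrease {x β y : ℚ} (hβ0 : 0 ≤ β)
    (h1 : FAdj x y) (h3 : ∀ y', FAdj x y' → β ≤ y' → y ≤ y') (hlt : β < y) :
    det y β < det x β := by
  have hdet1 : x.num * (y.den:ℤ) - y.num * (x.den:ℤ) = 1 := fadj_iff.1 h1
  have hdetyβ : 1 ≤ y.num * (β.den:ℤ) - β.num * (y.den:ℤ) := det_pos.2 hlt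
  have hnum0 : 0 ≤ β.num := Rat.num_nonneg.2 hβ0
  have hdx : (1:ℤ) ≤ (x.den:ℤ) := by exact_mod_cast x.pos
  have hdy : (1:ℤ) ≤ (y.den:ℤ) := by exact_mod_cast y.pos
  have hdβ : (1:ℤ) ≤ (β.den:ℤ) := by exact_mod_cast β.pos
  rcases le_or_gt y.den x.den with hcase | hcase
  · -- arithmetic case
    have hc : (y.den:ℤ) ≤ (x.den:ℤ) := by exact_mod_cast hcase
    show y.num * (β.den:ℤ) - β.num * (y.den:ℤ) < x.num * (β.den:ℤ) - β.num * (x.den:ℤ)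
    nlinarith [mul_nonneg (by linarith : (0:ℤ) ≤ y.num * (β.den:ℤ) - β.num * (y.den:ℤ) - 1)
      (by linarith : (0:ℤ) ≤ (x.den:ℤ) - (y.den:ℤ)), hdet1, hdβ, hdy,
      mul_le_mul_of_nonneg_left hc (le_trans zero_le_one hdβ)]
  · -- minimality case: consider the predecessor with denominator y.den - x.den
    set v : ℕ := y.den - x.den with hvdef
    have hvpos : 0 < v := by omega
    have hvcast : ((v:ℤ)) = (y.den:ℤ) - (x.den:ℤ) := by
      rw [hvdef]; push_cast [Nat.cast_sub hcase.le]; ring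
    set a : ℤ := y.num - x.num with hadef
    have hdet2 : x.num * ((v:ℤ)) - a * (x.den:ℤ) = 1 := by
      rw [hvcast, hadef]; linarith
    have hco : IsCoprime a ((v:ℤ)) := ⟨-(x.den:ℤ), x.num, by linarith⟩
    have hco' : a.natAbs.Coprime v := by
      have := Int.isCoprime_iff_gcd_eq_one.1 hco
      rwa [Int.gcd, Int.natAbs_natCast] at this
    set y2 : ℚ := ⟨a, v, hvpos.ne', hco'⟩ with hy2def
    have hy2num : y2.num = a := rfl
    have hy2den : y2.den = v := rfl
    have hfad2 : FAdj x y2 := fadj_iff.2 (by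
      show x.num * ((y2.den:ℕ):ℤ) - y2.num * (x.den:ℤ) = 1
      rw [hy2num, hy2den]; exact hdet2)
    -- y2 < β, else contradiction with minimality
    have hy2β : y2 < β := by
      by_contra hcon
      push_neg at hcon
      have hle := h3 y2 hfad2 hcon
      have hle2 : y2 ≤ y := pred_le_of_den_le hfad2 h1 (by omega)
      have heq : y2 = y := le_antisymm hle2 hle
      have : y2.den = y.den := by rw [heq]
      rw [hy2den] at this
      omega
    have hdetneg : det y2 β < 0 := det_neg.2 hy2β
    have : a * (β.den:ℤ) - β.num * ((v:ℤ)) < 0 := by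
      have : det y2 β = y2.num * (β.den:ℤ) - β.num * ((y2.den:ℕ):ℤ) := rfl
      rw [hy2num, hy2den] at this
      omega
    show y.num * (β.den:ℤ) - β.num * (y.den:ℤ) < x.num * (β.den:ℤ) - β.num * (x.den:ℤ)
    rw [hvcast] at this
    rw [hadef] at this
    linarith


def FPath (l : List ℚ) : Prop := l.Chain' FAdj

lemma mem_of_getLast?' {α : Type*} {l : List α} {c : α} (h : l.getLast? = some c) : c ∈ l := by
  obtain ⟨hne, heq⟩ := List.mem_getLast?_eq_getLast (Option.mem_def.2 h)
  exact heq ▸ List.getLast_mem hne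

lemma fpath_pairwise {l : List ℚ} (h : FPath l) : l.Pairwise (· > ·) :=
  List.isChain_iff_pairwise.1 (List.IsChain.imp (fun _ _ hab => hab.1) h)

lemma last_le {l : List ℚ} (h : l.Pairwise (· > ·)) {c e : ℚ} (hl : l.getLast? = some c)
    (he : e ∈ l) : c ≤ e := by
  induction l with
  | nil => simp at he
  | cons a t ih =>
    cases t with
    | nil =>
      simp only [List.getLast?_singleton, Option.some.injEq] at hl
      simp only [List.mem_singleton] at he
      rw [← hl, he]
    | cons b t' =>
      rw [List.getLast?_cons_cons] at hl
      rcases List.mem_cons.1 he with rfl | ht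
      · have hcmem : c ∈ b :: t' := mem_of_getLast?' hl
        exact (List.rel_of_pairwise_cons h hcmem).le
      · exact ih (List.Pairwise.of_cons h) hl ht

lemma mem_of_between {x y : ℚ} (hxy : FAdj x y) :
    ∀ (t : List ℚ) (u c : ℚ), FPath t → t.head? = some u → t.getLast? = some c →
      (∀ e ∈ t, e < x) → c ≤ y → y < u → y ∈ t := by
  intro t
  induction t with
  | nil => intro u c _ hh _ _ _ _; simp at hh
  | cons a t ih =>
    intro u c hp hh hl hlt hcy hyu
    simp only [List.head?_cons, Option.some.injEq] at hh
    subst hh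
    cases t with
    | nil =>
      simp only [List.getLast?_singleton, Option.some.injEq] at hl
      subst hl
      exact absurd hyu (not_lt.2 hcy)
    | cons w t' =>
      have hadj : FAdj a w := (List.isChain_cons_cons.1 hp).1
      have hp' : FPath (w :: t') := (List.isChain_cons_cons.1 hp).2
      rw [List.getLast?_cons_cons] at hl
      rcases lt_trichotomy y w with hyw | heq | hwy
      · have : y ∈ w :: t' :=
          ih w c hp' rfl hl (fun e he => hlt e (List.mem_cons_of_mem _ he)) hcy hyw
        exact List.mem_cons_of_mem _ this
      · exact List.mem_cons_of_mem _ (heq ▸ List.mem_cons_self)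
      · exfalso
        have hax : a < x := hlt a (List.mem_cons_self)
        have h1 : (a.den:ℤ) + (w.den:ℤ) ≤ (y.den:ℤ) := den_between hadj hwy hyu
        have h2 : (x.den:ℤ) + (y.den:ℤ) ≤ (a.den:ℤ) := den_between hxy hyu hax
        have hw : (1:ℤ) ≤ (w.den:ℤ) := by exact_mod_cast w.pos
        have hxd : (1:ℤ) ≤ (x.den:ℤ) := by exact_mod_cast x.pos
        omega

lemma farey_main (β : ℚ) (hβ0 : 0 ≤ β) :
    ∀ n : ℕ, ∀ x : ℚ, β < x → (det x β).toNat ≤ n →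
      ∃ l : List ℚ, (FPath l ∧ l.head? = some x ∧ l.getLast? = some β) ∧
        ∀ P : List ℚ, FPath P → P.head? = some x → P.getLast? = some β → l.Sublist P := by
  intro n
  induction n using Nat.strong_induction_on with
  | _ n IH =>
    intro x hx hdet
    obtain ⟨y, hy1, hy2, hy3⟩ := exists_min_pred x β hx
    have decomp : ∀ P : List ℚ, FPath P → P.head? = some x → P.getLast? = some β →
        ∃ t, P = x :: t ∧ t ≠ [] ∧ t.getLast? = some β := by
      intro P hP hh hl
      cases P with
      | nil => simp at hh
      | cons p t =>
        simp only [List.head?_cons, Option.some.injEq] at hh; subst hh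
        cases t with
        | nil =>
          simp only [List.getLast?_singleton, Option.some.injEq] at hl
          exact absurd hl (by intro he; rw [he] at hx; exact lt_irrefl _ hx)
        | cons w t' =>
          exact ⟨w :: t', rfl, by simp, by rwa [List.getLast?_cons_cons] at hl⟩
    rcases eq_or_lt_of_le hy2 with heq | hβy
    · -- y = β : the path [x, β]
      refine ⟨[x, β], ⟨List.isChain_pair.2 (heq ▸ hy1), rfl, rfl⟩, ?_⟩
      intro P hP hh hl
      obtain ⟨t, rfl, hne, hlast⟩ := decomp P hP hh hl
      exact (List.singleton_sublist.2 (mem_of_getLast?' hlast)).cons₂ x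
    · -- β < y
      have hdec : det y β < det x β := det_decrease hβ0 hy1 hy3 hβy
      have hypos : 0 < det y β := det_pos.2 hβy
      have hm : (det y β).toNat < n := by
        have hxpos : 0 < det x β := det_pos.2 hx
        omega
      obtain ⟨l', ⟨hl'p, hl'h, hl'l⟩, hl'min⟩ := IH _ hm y hβy le_rfl
      obtain ⟨l'', hl''⟩ : ∃ l'', l' = y :: l'' := by
        cases l' with
        | nil => simp at hl'h
        | cons z t => simp only [List.head?_cons, Option.some.injEq] at hl'h; exact ⟨t, by rw [hl'h]⟩
      refine ⟨x :: l', ⟨?_, rfl, ?_⟩, ?_⟩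
      · rw [hl'']
        exact List.isChain_cons_cons.2 ⟨hy1, hl'' ▸ hl'p⟩
      · rw [hl'', List.getLast?_cons_cons, ← hl'']
        exact hl'l
      · intro P hP hh hl
        obtain ⟨t, rfl, hne, hlast⟩ := decomp P hP hh hl
        -- t = v :: t''
        obtain ⟨v, t2, rfl⟩ : ∃ v t2, t = v :: t2 := by
          cases t with
          | nil => exact absurd rfl hne
          | cons v t2 => exact ⟨v, t2, rfl⟩
        have hxv : FAdj x v := (List.isChain_cons_cons.1 hP).1
        have hpt : FPath (v :: t2) := (List.isChain_cons_cons.1 hP).2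
        have hpw : (x :: v :: t2).Pairwise (· > ·) := fpath_pairwise hP
        have hβv : β ≤ v :=
          last_le (List.Pairwise.of_cons hpw) hlast (List.mem_cons_self)
        have hyv : y ≤ v := hy3 v hxv hβv
        have hymem : y ∈ v :: t2 := by
          rcases eq_or_lt_of_le hyv with heq2 | hlt2
          · exact heq2 ▸ List.mem_cons_self
          · exact mem_of_between hy1 (v :: t2) v β hpt rfl hlast
              (fun e he => List.rel_of_pairwise_cons hpw he) hβy.le hlt2
        obtain ⟨t1, t3, hsplit⟩ := List.append_of_mem hymem
        have hpt' : FPath (y :: t3) := (List.isChain_append.1 (hsplit ▸ hpt)).2.1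
        have hlast' : (y :: t3).getLast? = some β := by
          rw [hsplit, List.getLast?_append_of_ne_nil t1 (List.cons_ne_nil _ _)] at hlast
          exact hlast
        have hsub1 : l'.Sublist (y :: t3) := hl'min (y :: t3) hpt' rfl hlast'
        have hsub2 : (y :: t3).Sublist (v :: t2) := hsplit ▸ List.sublist_append_right t1 (y :: t3)
        exact (hsub1.trans hsub2).cons₂ x

lemma den_N_mul (N : ℕ) (hN : 0 < N) (x : ℚ) :
    ((N:ℚ) * x).den = x.den / N.gcd x.den := by
  set gd : ℕ := N.gcd x.den with hgdef
  have hg : 0 < gd := Nat.gcd_pos_of_pos_left _ hN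
  have hgd : gd ∣ x.den := Nat.gcd_dvd_right _ _
  have hgN : gd ∣ N := Nat.gcd_dvd_left _ _
  set n' : ℕ := N / gd with hn'def
  set d' : ℕ := x.den / gd with hd'def
  have hd' : d' ≠ 0 := (Nat.div_pos (Nat.le_of_dvd x.pos hgd) hg).ne'
  have hcop1 : Nat.Coprime n' d' := Nat.coprime_div_gcd_div_gcd hg
  have hcop2 : x.num.natAbs.Coprime d' :=
    Nat.Coprime.coprime_dvd_right (Nat.div_dvd_of_dvd hgd) x.reduced
  have hcop : ((n':ℤ) * x.num).natAbs.Coprime d' := by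
    rw [Int.natAbs_mul, Int.natAbs_natCast]
    exact Nat.Coprime.mul hcop1 hcop2
  have hq : (N:ℚ) * x = (⟨(n':ℤ) * x.num, d', hd', hcop⟩ : ℚ) := by
    rw [Rat.mk_eq_divInt, Rat.divInt_eq_div]
    have hd'Q : (((d':ℤ)):ℚ) ≠ 0 := by exact_mod_cast hd'
    rw [eq_div_iff hd'Q]
    push_cast
    rw [← mul_den_eq x]
    have eN : ((N:ℕ):ℚ) = (n':ℚ) * (gd:ℚ) := by exact_mod_cast (Nat.div_mul_cancel hgN).symm
    have ed : ((x.den:ℕ):ℚ) = (d':ℚ) * (gd:ℚ) := by exact_mod_cast (Nat.div_mul_cancel hgd).symm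
    rw [eN, ed]; ring
  rw [hq]

lemma lcm_eq (N : ℕ) (hN : 0 < N) (x : ℚ) :
    ((Nat.lcm N x.den : ℕ):ℚ) = (N:ℚ) * ((((N:ℚ) * x).den : ℕ):ℚ) := by
  have h := den_N_mul N hN x
  rw [h]
  have key : Nat.lcm N x.den = N * (x.den / N.gcd x.den) := by
    rw [Nat.lcm, Nat.mul_div_assoc _ (Nat.gcd_dvd_right _ _)]
  exact_mod_cast congrArg (fun m : ℕ => (m:ℚ)) key

lemma step_iff (N : ℕ) (hN : 0 < N) (x y : ℚ) :
    (y < x ∧ x - y = (N : ℚ) / ((Nat.lcm N x.den : ℚ) * (Nat.lcm N y.den : ℚ)))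
      ↔ FAdj ((N:ℚ) * x) ((N:ℚ) * y) := by
  have hNQ : (0:ℚ) < (N:ℚ) := by exact_mod_cast hN
  have hDx : (0:ℚ) < ((((N:ℚ) * x).den : ℕ):ℚ) := den_cast_pos _
  have hDy : (0:ℚ) < ((((N:ℚ) * y).den : ℕ):ℚ) := den_cast_pos _
  rw [lcm_eq N hN x, lcm_eq N hN y]
  unfold FAdj
  constructor
  · rintro ⟨h1, h2⟩
    refine ⟨mul_lt_mul_of_pos_left h1 hNQ, ?_⟩
    have e : (N:ℚ) * x - (N:ℚ) * y = (N:ℚ) * (x - y) := by ring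
    rw [e, h2]
    field_simp
  · rintro ⟨h1, h2⟩
    refine ⟨lt_of_mul_lt_mul_left h1 hNQ.le, ?_⟩
    have e : x - y = ((N:ℚ) * x - (N:ℚ) * y) / (N:ℚ) := by
      rw [eq_div_iff (by exact_mod_cast hN.ne' : ((N:ℚ)) ≠ 0)]; ring
    rw [e, h2]
    field_simp

end Stmt15Aux

/-- For any rational numbers `a > a' ≥ 0` and any positive
integer `N`, there exists a unique shortest `N`-path from `a` to `a'`. -/
theorem stmt15 (N : ℕ) (hN : 0 < N) (a a' : ℚ) (h : a' < a) (h0 : 0 ≤ a') :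
    ∃! l : List ℚ, IsShortestNPath N a a' l := by
  classical
  have hNQpos : (0:ℚ) < (N:ℚ) := by exact_mod_cast hN
  have hNQ : ((N:ℚ)) ≠ 0 := hNQpos.ne'
  set f : ℚ → ℚ := fun q => (N:ℚ) * q with hf
  set g : ℚ → ℚ := fun q => q / (N:ℚ) with hg
  have hgf : ∀ q, g (f q) = q := fun q => by
    show ((N:ℚ) * q) / (N:ℚ) = q
    field_simp
  have hfg : ∀ q, f (g q) = q := fun q => by
    show (N:ℚ) * (q / (N:ℚ)) = q
    field_simp
  have hpath : ∀ l : List ℚ, IsNPath N l ↔ Stmt15Aux.FPath (l.map f) := by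
    intro l
    unfold IsNPath Stmt15Aux.FPath
    unfold List.Chain'
    rw [List.isChain_map]
    constructor
    · exact List.IsChain.imp (fun a b hab => (Stmt15Aux.step_iff N hN a b).1 hab)
    · exact List.IsChain.imp (fun a b hab => (Stmt15Aux.step_iff N hN a b).2 hab)
  have hinj : ∀ p q : ℚ, f p = f q → p = q := by
    intro p q hpq
    rw [← hgf p, hpq, hgf q]
  have hhead : ∀ (l : List ℚ) (q : ℚ), l.head? = some q ↔ (l.map f).head? = some (f q) := by
    intro l q
    rw [List.head?_map]
    constructor
    · intro hh; rw [hh]; rfl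
    · intro hh
      cases hl : l.head? with
      | none => rw [hl] at hh; simp at hh
      | some w =>
        rw [hl] at hh
        simp only [Option.map_some, Option.some.injEq] at hh
        exact congrArg some (hinj w q hh)
  have hlast : ∀ (l : List ℚ) (q : ℚ), l.getLast? = some q ↔ (l.map f).getLast? = some (f q) := by
    intro l q
    rw [List.getLast?_map]
    constructor
    · intro hh; rw [hh]; rfl
    · intro hh
      cases hl : l.getLast? with
      | none => rw [hl] at hh; simp at hh
      | some w =>
        rw [hl] at hh
        simp only [Option.map_some, Option.some.injEq] at hh
        exact congrArg some (hinj w q hh)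
  have hb : f a' < f a := mul_lt_mul_of_pos_left h hNQpos
  have hb0 : 0 ≤ f a' := mul_nonneg hNQpos.le h0
  obtain ⟨L, ⟨HP, Hh, Hl⟩, Hmin⟩ :=
    Stmt15Aux.farey_main (f a') hb0 (Stmt15Aux.det (f a) (f a')).toNat (f a) hb le_rfl
  set l : List ℚ := L.map g with hldef
  have hlL : l.map f = L := by
    rw [hldef, List.map_map]
    have : (f ∘ g) = id := funext hfg
    rw [this, List.map_id]
  have hAfrom : IsNPathFrom N a a' l := by
    refine ⟨(hpath l).2 (by rw [hlL]; exact HP), ?_, ?_⟩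
    · exact (hhead l a).2 (by rw [hlL]; exact Hh)
    · exact (hlast l a').2 (by rw [hlL]; exact Hl)
  have hB : ∀ P, IsNPathFrom N a a' P → l.Sublist P := by
    rintro P ⟨hP1, hP2, hP3⟩
    have h1 : Stmt15Aux.FPath (P.map f) := (hpath P).1 hP1
    have h2 : (P.map f).head? = some (f a) := (hhead P a).1 hP2
    have h3 : (P.map f).getLast? = some (f a') := (hlast P a').1 hP3
    have hsub : L.Sublist (P.map f) := Hmin _ h1 h2 h3
    have hsub' := hsub.map g
    rw [List.map_map] at hsub'
    have : (g ∘ f) = id := funext hgf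
    rw [this, List.map_id] at hsub'
    exact hsub'
  refine ⟨l, ⟨hAfrom, ?_⟩, ?_⟩
  · intro l'' hsub hne hcon
    exact hne (hsub.antisymm (hB l'' hcon))
  · rintro P ⟨hPfrom, hPmin⟩
    by_contra hne
    exact hPmin l (hB P hPfrom) (fun he => hne he.symm) hAfrom
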